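/- arXiv:2204.04893 — 9 statements merged into one kernel-verified Lean document; each statement's English description precedes it below -/
import Mathlib

section
/- Let X be a metric space and μ a Borel probability measure on X. If closed sets A_n converge weakly (in the Kuratowski–Painlevé sense) to a closed set A, then μ(A) ≥ limsup_n μ(A_n). -/
open MeasureTheory Metric EMetric Set Filter Topology ENNReal

def WeakConvSets {X : Type*} [PseudoEMetricSpace X] (A : ℕ → Set X) (L : Set X) : Prop :=
  (∀ x ∈ L, Filter.Tendsto (fun n => EMetric.infEdist x (A n)) Filter.atTop (nhds 0)) ∧
  (∀ x ∉ L, 0 < Filter.liminf (fun n => EMetric.infEdist x (A n)) Filter.atTop)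

theorem stmt4 {X : Type*} [MetricSpace X] [MeasurableSpace X] [BorelSpace X]
    (μ : Measure X) [IsProbabilityMeasure μ] (A : ℕ → Set X) (L : Set X)
    (hA : ∀ n, IsClosed (A n)) (hL : IsClosed L) (h : WeakConvSets A L) :
    Filter.limsup (fun n => μ (A n)) Filter.atTop ≤ μ L := by
  obtain ⟨h1, h2⟩ := h
  -- limsup of the sets is contained in L
  have hsub : Filter.limsup A Filter.atTop ⊆ L := by
    intro x hx
    by_contra hxL
    have hfreq : ∃ᶠ n in Filter.atTop, x ∈ A n := mem_limsup_iff_frequently_mem.mp hx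
    have : Filter.liminf (fun n => EMetric.infEdist x (A n)) Filter.atTop ≤ 0 := by
      apply Filter.liminf_le_of_frequently_le'
      exact hfreq.mono fun n hn => le_of_eq (infEdist_zero_of_mem hn)
    exact absurd (le_antisymm this zero_le) (h2 x hxL).ne'
  set S : ℕ → Set X := fun n => ⋃ k, ⋃ _ : k ≥ n, A k with hS
  have hS_meas : ∀ n, MeasurableSet (S n) := fun n =>
    MeasurableSet.iUnion fun k => MeasurableSet.iUnion fun _ => (hA k).measurableSet
  have hS_anti : Antitone S := fun m n hmn =>
    Set.iUnion₂_subset fun k hk => Set.subset_iUnion₂ (s := fun k _ => A k) k (le_trans hmn hk)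
  have htend : Filter.Tendsto (μ ∘ S) Filter.atTop (nhds (μ (⋂ n, S n))) :=
    tendsto_measure_iInter_atTop (fun n => (hS_meas n).nullMeasurableSet) hS_anti
      ⟨0, measure_ne_top μ _⟩
  have hiInter : (⋂ n, S n) = Filter.limsup A Filter.atTop := by
    rw [Filter.limsup_eq_iInf_iSup_of_nat]
    rfl
  calc Filter.limsup (fun n => μ (A n)) Filter.atTop
      ≤ Filter.limsup (μ ∘ S) Filter.atTop := by
        apply Filter.limsup_le_limsup
        · exact Filter.Eventually.of_forall fun n =>
            measure_mono (Set.subset_iUnion₂ (s := fun k _ => A k) n le_rfl)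
        · isBoundedDefault
        · isBoundedDefault
    _ = μ (⋂ n, S n) := htend.limsup_eq
    _ ≤ μ L := by rw [hiInter]; exact measure_mono hsub
end

section
/- Let X × X carry the l¹-metric for a metric space X. If closed sets S_n ⊆ X × X converge weakly (Kuratowski–Painlevé) to a closed set S, then dis_Δ(S) ≤ liminf_n dis_Δ(S_n). -/
open MeasureTheory Metric EMetric Set Filter Topology ENNReal

noncomputable def disDelta {X : Type*} [PseudoMetricSpace X] (S : Set (X × X)) : ℝ≥0∞ :=
  ⨆ p ∈ S, ENNReal.ofReal (dist p.1 p.2)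

noncomputable def infEdistL1 {X Y : Type*} [PseudoEMetricSpace X] [PseudoEMetricSpace Y]
    (p : X × Y) (S : Set (X × Y)) : ℝ≥0∞ :=
  ⨅ q ∈ S, (edist p.1 q.1 + edist p.2 q.2)

def WeakConvL1 {X Y : Type*} [PseudoEMetricSpace X] [PseudoEMetricSpace Y]
    (A : ℕ → Set (X × Y)) (L : Set (X × Y)) : Prop :=
  (∀ p ∈ L, Filter.Tendsto (fun n => infEdistL1 p (A n)) Filter.atTop (nhds 0)) ∧
  (∀ p ∉ L, 0 < Filter.liminf (fun n => infEdistL1 p (A n)) Filter.atTop)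

theorem stmt5 {X : Type*} [MetricSpace X]
    (S : ℕ → Set (X × X)) (L : Set (X × X))
    (hS : ∀ n, IsClosed (S n)) (hL : IsClosed L) (h : WeakConvL1 S L) :
    disDelta L ≤ Filter.liminf (fun n => disDelta (S n)) Filter.atTop := by
  rw [disDelta]
  apply iSup₂_le
  intro p hp
  rw [← edist_dist]
  have key : ∀ ε : ℝ≥0∞, 0 < ε →
      edist p.1 p.2 - ε ≤ Filter.liminf (fun n => disDelta (S n)) Filter.atTop := by
    intro ε hε
    refine Filter.le_liminf_of_le (by isBoundedDefault) ?_
    filter_upwards [(h.1 p hp).eventually_lt_const hε] with n hn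
    obtain ⟨q, hq, hqd⟩ : ∃ q ∈ S n, edist p.1 q.1 + edist p.2 q.2 < ε := by
      by_contra hc
      push_neg at hc
      exact absurd hn (not_lt.2 (le_iInf₂ hc))
    have tri : edist p.1 p.2 ≤ edist q.1 q.2 + (edist p.1 q.1 + edist p.2 q.2) := by
      calc edist p.1 p.2 ≤ edist p.1 q.1 + edist q.1 p.2 := edist_triangle _ _ _
        _ ≤ edist p.1 q.1 + (edist q.1 q.2 + edist q.2 p.2) := by
            gcongr; exact edist_triangle _ _ _
        _ = edist q.1 q.2 + (edist p.1 q.1 + edist p.2 q.2) := by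
            rw [edist_comm q.2 p.2]; ring
    have h1 : edist p.1 p.2 - ε ≤ edist q.1 q.2 := by
      apply tsub_le_iff_right.2
      exact tri.trans (add_le_add le_rfl hqd.le)
    refine h1.trans ?_
    have : ENNReal.ofReal (dist q.1 q.2) ≤ disDelta (S n) := le_iSup₂ (f := fun r _ => ENNReal.ofReal (dist r.1 r.2)) q hq
    rwa [← edist_dist] at this
  by_cases hlt : edist p.1 p.2 = 0
  · simp [hlt]
  · apply ENNReal.le_of_forall_pos_le_add
    intro ε hε _
    have := key (ε : ℝ≥0∞) (by exact_mod_cast hε)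
    exact tsub_le_iff_right.1 this
end

section
/- In a second countable metric space X, every sequence of closed subsets of X has a subsequence that converges in the weak Hausdorff (Kuratowski–Painlevé) sense to some closed set. -/
open MeasureTheory Metric EMetric Set Filter Topology ENNReal

private lemma liminf_cadd (c : ℝ≥0∞) (f : ℕ → ℝ≥0∞) :
    Filter.liminf (fun n => c + f n) Filter.atTop = c + Filter.liminf f Filter.atTop :=
  liminf_const_add Filter.atTop f c
    (Filter.IsBoundedUnder.isCoboundedUnder_ge
      (Filter.isBoundedUnder_of ⟨⊤, fun _ => le_top⟩))
    (Filter.isBoundedUnder_of ⟨0, fun _ => zero_le⟩)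

theorem stmt6 {X : Type*} [MetricSpace X] [SecondCountableTopology X]
    (A : ℕ → Set X) (hA : ∀ n, IsClosed (A n)) :
    ∃ φ : ℕ → ℕ, StrictMono φ ∧ ∃ L : Set X, IsClosed L ∧
      WeakConvSets (fun n => A (φ n)) L := by
  by_cases hX : Nonempty X
  · set x : ℕ → X := TopologicalSpace.denseSeq X with hx
    have hdense : DenseRange x := TopologicalSpace.denseRange_denseSeq X
    obtain ⟨c, φ, hφ, hconv⟩ :=
      CompactSpace.tendsto_subseq (X := ℕ → ℝ≥0∞)
        (fun n k => infEdist (x k) (A n))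
    have hck : ∀ k, Tendsto (fun n => infEdist (x k) (A (φ n))) atTop (𝓝 (c k)) := by
      intro k
      exact tendsto_pi_nhds.mp hconv k
    set f : X → ℝ≥0∞ := fun y => Filter.liminf (fun n => infEdist y (A (φ n))) Filter.atTop
      with hf
    -- Lipschitz-type estimate for f
    have hlip : ∀ y z : X, f y ≤ edist y z + f z := by
      intro y z
      have h1 : ∀ n, infEdist y (A (φ n)) ≤ edist y z + infEdist z (A (φ n)) := by
        intro n
        calc infEdist y (A (φ n)) ≤ infEdist z (A (φ n)) + edist y z :=
              infEdist_le_infEdist_add_edist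
          _ = edist y z + infEdist z (A (φ n)) := add_comm _ _
      calc f y ≤ Filter.liminf (fun n => edist y z + infEdist z (A (φ n))) Filter.atTop :=
            Filter.liminf_le_liminf (Filter.Eventually.of_forall h1)
        _ = edist y z + f z := liminf_cadd _ _
    -- limsup ≤ liminf for every point
    have hkey : ∀ y : X, Filter.limsup (fun n => infEdist y (A (φ n))) Filter.atTop ≤ f y := by
      intro y
      have hk : ∀ k, Filter.limsup (fun n => infEdist y (A (φ n))) Filter.atTop
          ≤ 2 * edist y (x k) + f y := by
        intro k
        have h1 : Filter.limsup (fun n => infEdist y (A (φ n))) Filter.atTop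
            ≤ edist y (x k) + c k := by
          have hle : ∀ n, infEdist y (A (φ n)) ≤ edist y (x k) + infEdist (x k) (A (φ n)) := by
            intro n
            calc infEdist y (A (φ n)) ≤ infEdist (x k) (A (φ n)) + edist y (x k) :=
                  infEdist_le_infEdist_add_edist
              _ = edist y (x k) + infEdist (x k) (A (φ n)) := add_comm _ _
          have ht : Tendsto (fun n => edist y (x k) + infEdist (x k) (A (φ n))) atTop
              (𝓝 (edist y (x k) + c k)) := Tendsto.const_add _ (hck k)
          calc Filter.limsup (fun n => infEdist y (A (φ n))) Filter.atTop
              ≤ Filter.limsup (fun n => edist y (x k) + infEdist (x k) (A (φ n)))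
                  Filter.atTop := Filter.limsup_le_limsup (Filter.Eventually.of_forall hle)
            _ = edist y (x k) + c k := ht.limsup_eq
        have h2 : c k ≤ edist y (x k) + f y := by
          have hle : ∀ n, infEdist (x k) (A (φ n)) ≤ edist y (x k) + infEdist y (A (φ n)) := by
            intro n
            calc infEdist (x k) (A (φ n)) ≤ infEdist y (A (φ n)) + edist (x k) y :=
                  infEdist_le_infEdist_add_edist
              _ = edist y (x k) + infEdist y (A (φ n)) := by rw [edist_comm, add_comm]
          calc c k = Filter.liminf (fun n => infEdist (x k) (A (φ n))) Filter.atTop :=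
                (hck k).liminf_eq.symm
            _ ≤ Filter.liminf (fun n => edist y (x k) + infEdist y (A (φ n))) Filter.atTop :=
                Filter.liminf_le_liminf (Filter.Eventually.of_forall hle)
            _ = edist y (x k) + f y := liminf_cadd _ _
        calc Filter.limsup (fun n => infEdist y (A (φ n))) Filter.atTop
            ≤ edist y (x k) + c k := h1
          _ ≤ edist y (x k) + (edist y (x k) + f y) := add_le_add le_rfl h2
          _ = 2 * edist y (x k) + f y := by ring
      refine ENNReal.le_of_forall_pos_le_add fun ε hε _ => ?_
      have hε2 : (0 : ℝ≥0∞) < (ε : ℝ≥0∞) / 2 :=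
        ENNReal.div_pos (by exact_mod_cast hε.ne') (by norm_num)
      obtain ⟨z, ⟨k, rfl⟩, hzlt⟩ :=
        EMetric.mem_closure_iff.mp (hdense y) ((ε : ℝ≥0∞) / 2) hε2
      calc Filter.limsup (fun n => infEdist y (A (φ n))) Filter.atTop
          ≤ 2 * edist y (x k) + f y := hk k
        _ ≤ 2 * ((ε : ℝ≥0∞) / 2) + f y := by
            gcongr <;> exact hzlt.le
        _ = f y + ε := by
            rw [ENNReal.mul_div_cancel' (by norm_num) (by norm_num), add_comm]
    refine ⟨φ, hφ, {y | f y = 0}, ?_, ?_, ?_⟩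
    · rw [← isOpen_compl_iff]
      rw [EMetric.isOpen_iff]
      intro y hy
      have hy0 : 0 < f y := pos_iff_ne_zero.mpr hy
      refine ⟨min (f y) 1, lt_min hy0 zero_lt_one, fun z hz => ?_⟩
      intro hz0
      have h1 : f y ≤ edist y z + f z := hlip y z
      rw [hz0, add_zero] at h1
      have hyz : edist y z < min (f y) 1 := by
        rw [edist_comm]; exact EMetric.mem_ball.mp hz
      exact absurd (lt_of_le_of_lt h1 (hyz.trans_le (min_le_left _ _))) (lt_irrefl _)
    · intro y hy
      have h0 : f y = 0 := hy
      have hsup : Filter.limsup (fun n => infEdist y (A (φ n))) Filter.atTop = 0 :=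
        le_antisymm (h0 ▸ hkey y) zero_le
      exact tendsto_of_liminf_eq_limsup h0 hsup
    · intro y hy
      exact pos_iff_ne_zero.mpr hy
  · exact ⟨id, strictMono_id, ∅, isClosed_empty,
      fun y _ => (hX ⟨y⟩).elim, fun y _ => (hX ⟨y⟩).elim⟩
end

section
/- Let X be a complete separable metric space and π a Borel probability measure on X × X. Then there exists a closed set S ⊆ X × X attaining the infimum dis_Δ(π) = max{dis_Δ(S), 1 − π(S)}. -/
open MeasureTheory Metric EMetric Set Filter Topology ENNReal

noncomputable def disDeltaM {X : Type*} [PseudoMetricSpace X] [MeasurableSpace X]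
    (π : Measure (X × X)) : ℝ≥0∞ :=
  ⨅ S ∈ {S : Set (X × X) | IsClosed S}, max (disDelta S) (1 - π S)

theorem stmt7 {X : Type*} [MetricSpace X] [CompleteSpace X] [TopologicalSpace.SeparableSpace X]
    [MeasurableSpace X] [BorelSpace X]
    (π : Measure (X × X)) [IsProbabilityMeasure π] :
    ∃ S : Set (X × X), IsClosed S ∧ disDeltaM π = max (disDelta S) (1 - π S) := by
  set c := disDeltaM π with hc
  have hcont : Continuous fun p : X × X => dist p.1 p.2 := continuous_dist
  have hclosed : ∀ t : ℝ, IsClosed {p : X × X | dist p.1 p.2 ≤ t} :=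
    fun t => isClosed_le hcont continuous_const
  have hc1 : c ≤ 1 := by
    have h := iInf₂_le (f := fun (S : Set (X × X)) (_ : S ∈ {S : Set (X × X) | IsClosed S}) =>
      max (disDelta S) (1 - π S)) (∅ : Set (X × X)) isClosed_empty
    simpa [hc, disDelta, disDeltaM, measure_empty] using h
  have hcne : c ≠ ∞ := (hc1.trans_lt (by norm_num)).ne
  set r : ℝ := c.toReal with hr
  have hofr : ENNReal.ofReal r = c := ENNReal.ofReal_toReal hcne
  have hrnn : 0 ≤ r := ENNReal.toReal_nonneg
  -- Step A : for all ε > 0, 1 - π S_{r+ε} ≤ c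
  have key : ∀ ε : ℝ, 0 < ε → 1 - π {p : X × X | dist p.1 p.2 ≤ r + ε} ≤ c := by
    intro ε hε
    refine ENNReal.le_of_forall_pos_le_add fun η hη hlt => ?_
    set η' : ℝ≥0∞ := min (η : ℝ≥0∞) (ENNReal.ofReal ε) with hη'
    have hη'pos : 0 < η' := lt_min (by exact_mod_cast hη) (ENNReal.ofReal_pos.2 hε)
    have hclt : c < c + η' := ENNReal.lt_add_right hcne hη'pos.ne'
    have hex : ∃ S : Set (X × X), disDelta S < c + η' ∧ IsClosed S ∧ 1 - π S < c + η' := by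
      have : disDeltaM π < c + η' := hc ▸ hclt
      rw [disDeltaM] at this
      simpa [iInf_lt_iff] using this
    obtain ⟨S, hd1, hScl, hd2⟩ := hex
    have hS : disDelta S < c + η' ∧ 1 - π S < c + η' := ⟨hd1, hd2⟩
    have hsub : S ⊆ {p : X × X | dist p.1 p.2 ≤ r + ε} := by
      intro p hp
      have h1 : ENNReal.ofReal (dist p.1 p.2) ≤ disDelta S :=
        le_iSup₂ (f := fun (q : X × X) (_ : q ∈ S) => ENNReal.ofReal (dist q.1 q.2)) p hp
      have h2 : ENNReal.ofReal (dist p.1 p.2) ≤ ENNReal.ofReal (r + ε) := by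
        calc ENNReal.ofReal (dist p.1 p.2) ≤ c + η' := h1.trans hS.1.le
        _ ≤ c + ENNReal.ofReal ε := add_le_add le_rfl (min_le_right _ _)
        _ = ENNReal.ofReal (r + ε) := by rw [ENNReal.ofReal_add hrnn hε.le, hofr]
      exact (ENNReal.ofReal_le_ofReal_iff (by linarith)).1 h2
    calc 1 - π {p : X × X | dist p.1 p.2 ≤ r + ε} ≤ 1 - π S :=
          tsub_le_tsub_left (measure_mono hsub) 1
      _ ≤ c + η' := hS.2.le
      _ ≤ c + η := add_le_add le_rfl (min_le_left _ _)
  -- the candidate set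
  refine ⟨{p : X × X | dist p.1 p.2 ≤ r}, hclosed r, ?_⟩
  have hdis : disDelta {p : X × X | dist p.1 p.2 ≤ r} ≤ c := by
    refine iSup₂_le fun p hp => ?_
    calc ENNReal.ofReal (dist p.1 p.2) ≤ ENNReal.ofReal r := ENNReal.ofReal_le_ofReal hp
      _ = c := hofr
  have hInter : {p : X × X | dist p.1 p.2 ≤ r}
      = ⋂ n : ℕ, {p : X × X | dist p.1 p.2 ≤ r + 1 / (n + 1)} := by
    ext p
    simp only [mem_iInter, mem_setOf_eq]
    constructor
    · intro h n
      have : (0 : ℝ) < 1 / (n + 1) := by positivity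
      linarith
    · intro h
      refine le_of_forall_pos_le_add fun ε hε => ?_
      obtain ⟨n, hn⟩ := exists_nat_one_div_lt hε
      have := h n
      linarith
  have hmeas : π {p : X × X | dist p.1 p.2 ≤ r}
      = ⨅ n : ℕ, π {p : X × X | dist p.1 p.2 ≤ r + 1 / (n + 1)} := by
    rw [hInter]
    refine Directed.measure_iInter (fun n => ((hclosed _).measurableSet).nullMeasurableSet)
      ?_ ⟨0, measure_ne_top π _⟩
    have hanti : Antitone fun n : ℕ => {p : X × X | dist p.1 p.2 ≤ r + 1 / (n + 1)} := by
      intro m n hmn p hp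
      simp only [mem_setOf_eq] at hp ⊢
      have h1 : (1 : ℝ) / (n + 1) ≤ 1 / (m + 1) := by
        apply one_div_le_one_div_of_le (by positivity)
        exact_mod_cast Nat.succ_le_succ hmn
      linarith
    exact hanti.directed_ge
  have hsubm : 1 - π {p : X × X | dist p.1 p.2 ≤ r} ≤ c := by
    rw [hmeas, ENNReal.sub_iInf]
    exact iSup_le fun n => key _ (by positivity)
  refine le_antisymm ?_ (max_le hdis hsubm)
  exact iInf₂_le (f := fun (S : Set (X × X)) (_ : S ∈ {S : Set (X × X) | IsClosed S}) =>
    max (disDelta S) (1 - π S)) _ (hclosed r)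
end

section
/- Let φ : [0,1) → X and ψ : [0,1) → Y be parameters of mm-spaces X and Y. Then □(φ*d_X, ψ*d_Y) = dis((φ,ψ)_*L¹), i.e., the box distance between the pulled-back pseudo-metrics equals the distortion of the induced coupling. -/
open MeasureTheory Metric EMetric Set Filter Topology ENNReal

attribute [local instance] MeasureTheory.Measure.Subtype.measureSpace

abbrev I01 : Type := ↥(Set.Ico (0:ℝ) 1)

open Classical in
noncomputable def disS {X Y : Type*} [PseudoMetricSpace X] [PseudoMetricSpace Y]
    (S : Set (X × Y)) : ℝ≥0∞ :=
  if S = ∅ then ⊤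
  else ⨆ p ∈ S, ⨆ q ∈ S, ENNReal.ofReal |dist p.1 q.1 - dist p.2 q.2|

noncomputable def dism {X Y : Type*} [PseudoMetricSpace X] [PseudoMetricSpace Y]
    [MeasurableSpace X] [MeasurableSpace Y] (π : Measure (X × Y)) : ℝ≥0∞ :=
  ⨅ S ∈ {S : Set (X × Y) | IsClosed S}, max (disS S) (1 - π S)

noncomputable def boxP (ρ₁ ρ₂ : I01 → I01 → ℝ) : ℝ≥0∞ :=
  ⨅ ε ∈ {ε : ℝ≥0∞ | ∃ I₀ : Set I01, MeasurableSet I₀ ∧ 1 - ε ≤ volume I₀ ∧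
      ∀ s ∈ I₀, ∀ t ∈ I₀, |ρ₁ s t - ρ₂ s t| ≤ ε.toReal}, ε

instance : IsProbabilityMeasure (volume : Measure I01) := by
  constructor
  rw [MeasureTheory.Measure.Subtype.volume_univ measurableSet_Ico.nullMeasurableSet]
  simp

theorem stmt10 {X : Type*} [MetricSpace X] [CompleteSpace X] [TopologicalSpace.SeparableSpace X]
    [MeasurableSpace X] [BorelSpace X] {Y : Type*} [MetricSpace Y] [CompleteSpace Y] [TopologicalSpace.SeparableSpace Y]
    [MeasurableSpace Y] [BorelSpace Y]
    (mX : Measure X) (mY : Measure Y) [IsProbabilityMeasure mX] [IsProbabilityMeasure mY]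
    (φ : I01 → X) (ψ : I01 → Y) (hφ : Measurable φ) (hψ : Measurable ψ)
    (hφm : volume.map φ = mX) (hψm : volume.map ψ = mY) :
    boxP (fun s t => dist (φ s) (φ t)) (fun s t => dist (ψ s) (ψ t)) =
      dism (volume.map (fun s => (φ s, ψ s))) := by
  haveI : SecondCountableTopology X := UniformSpace.secondCountable_of_separable X
  haveI : SecondCountableTopology Y := UniformSpace.secondCountable_of_separable Y
  set f : I01 → X × Y := fun s => (φ s, ψ s) with hf
  have hfm : Measurable f := hφ.prodMk hψ
  set π := volume.map f with hπ
  have hπapp : ∀ S : Set (X × Y), MeasurableSet S → π S = volume (f ⁻¹' S) := fun S hS =>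
    Measure.map_apply hfm hS
  apply le_antisymm
  · -- boxP ≤ dism
    apply le_iInf₂
    intro S hS
    rcases eq_or_ne S ∅ with rfl | hSne
    · simp [disS]
    by_cases htop : disS S = ⊤
    · simp [htop]
    set ε : ℝ≥0∞ := max (disS S) (1 - π S) with hε
    have hεtop : ε ≠ ⊤ := by
      simp only [hε, ne_eq, max_eq_top, htop, false_or, not_false_iff]
      exact fun h => absurd h (by
        intro h'
        have : (1 : ℝ≥0∞) - π S ≤ 1 := tsub_le_self
        rw [h'] at this
        exact absurd this (by simp))
    apply iInf₂_le
    refine ⟨f ⁻¹' S, hfm hS.measurableSet, ?_, ?_⟩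
    · rw [← hπapp S hS.measurableSet]
      calc (1:ℝ≥0∞) - ε ≤ 1 - (1 - π S) := tsub_le_tsub_left (le_max_right _ _) 1
        _ ≤ π S := tsub_le_iff_left.mpr le_tsub_add
    · intro s hs t ht
      have h1 : ENNReal.ofReal |dist (φ s) (φ t) - dist (ψ s) (ψ t)| ≤ disS S := by
        rw [disS, if_neg hSne]
        exact le_iSup₂_of_le (f s) hs (le_iSup₂_of_le (f t) ht le_rfl)
      have h2 : ENNReal.ofReal |dist (φ s) (φ t) - dist (ψ s) (ψ t)| ≤ ε :=
        h1.trans (le_max_left _ _)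
      calc |dist (φ s) (φ t) - dist (ψ s) (ψ t)|
          = (ENNReal.ofReal |dist (φ s) (φ t) - dist (ψ s) (ψ t)|).toReal := by
            rw [ENNReal.toReal_ofReal (abs_nonneg _)]
        _ ≤ ε.toReal := ENNReal.toReal_mono hεtop h2
  · -- dism ≤ boxP
    apply le_iInf₂
    rintro ε ⟨I₀, hI₀m, hI₀v, hI₀⟩
    by_cases hε1 : 1 ≤ ε
    · -- use a singleton
      have s0 : I01 := ⟨0, by constructor <;> norm_num⟩
      refine iInf₂_le_of_le {f s0} isClosed_singleton ?_
      have hd : disS ({f s0} : Set (X × Y)) = 0 := by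
        rw [disS, if_neg (singleton_ne_empty _)]
        simp
      rw [hd]
      refine max_le (by simp) ?_
      exact le_trans tsub_le_self hε1
    push_neg at hε1
    have hεtop : ε ≠ ⊤ := (hε1.trans (by norm_num)).ne
    have hI₀ne : I₀.Nonempty := by
      rw [nonempty_iff_ne_empty]
      rintro rfl
      simp only [measure_empty] at hI₀v
      exact absurd (by simpa using tsub_le_iff_right.mp hI₀v) (not_le.mpr hε1)
    set S : Set (X × Y) := closure (f '' I₀) with hSdef
    refine iInf₂_le_of_le S isClosed_closure ?_
    have hSm : MeasurableSet S := isClosed_closure.measurableSet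
    have hSne : S ≠ ∅ := by
      rw [← nonempty_iff_ne_empty]
      exact (hI₀ne.image f).closure
    have hdis : disS S ≤ ε := by
      rw [disS, if_neg hSne]
      have hT : ∀ p ∈ S, ∀ q ∈ S, |dist p.1 q.1 - dist p.2 q.2| ≤ ε.toReal := by
        have key : S ×ˢ S ⊆ {pq : (X × Y) × (X × Y) |
            |dist pq.1.1 pq.2.1 - dist pq.1.2 pq.2.2| ≤ ε.toReal} := by
          have hclosed : IsClosed {pq : (X × Y) × (X × Y) |
              |dist pq.1.1 pq.2.1 - dist pq.1.2 pq.2.2| ≤ ε.toReal} := by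
            apply isClosed_le _ continuous_const
            apply Continuous.abs
            exact ((continuous_dist.comp ((continuous_fst.fst).prodMk
              (continuous_snd.fst))).sub (continuous_dist.comp ((continuous_fst.snd).prodMk
              (continuous_snd.snd))))
          rw [hSdef, ← closure_prod_eq]
          apply closure_minimal _ hclosed
          rintro ⟨p, q⟩ ⟨⟨s, hs, rfl⟩, ⟨t, ht, rfl⟩⟩
          exact hI₀ s hs t ht
        intro p hp q hq
        exact key (mk_mem_prod hp hq)
      refine iSup₂_le fun p hp => iSup₂_le fun q hq => ?_
      calc ENNReal.ofReal |dist p.1 q.1 - dist p.2 q.2| ≤ ENNReal.ofReal ε.toReal :=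
            ENNReal.ofReal_le_ofReal (hT p hp q hq)
        _ = ε := ENNReal.ofReal_toReal hεtop
    refine max_le hdis ?_
    have hle : volume I₀ ≤ π S := by
      rw [hπapp S hSm]
      exact measure_mono fun s hs => subset_closure (mem_image_of_mem f hs)
    rw [tsub_le_iff_right]
    calc (1:ℝ≥0∞) ≤ ε + volume I₀ := tsub_le_iff_left.mp hI₀v
      _ ≤ ε + π S := add_le_add le_rfl hle
end

section
/- For mm-spaces X and Y, the box distance satisfies □(X,Y) = inf over couplings π ∈ Π(m_X, m_Y) of dis(π). -/
open MeasureTheory Metric EMetric Set Filter Topology ENNReal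

attribute [local instance] MeasureTheory.Measure.Subtype.measureSpace

noncomputable def boxDist {X Y : Type*} [MetricSpace X] [MetricSpace Y]
    [MeasurableSpace X] [MeasurableSpace Y] (mX : Measure X) (mY : Measure Y) : ℝ≥0∞ :=
  ⨅ φ ∈ {φ : I01 → X | Measurable φ ∧ volume.map φ = mX},
    ⨅ ψ ∈ {ψ : I01 → Y | Measurable ψ ∧ volume.map ψ = mY},
      boxP (fun s t => dist (φ s) (φ t)) (fun s t => dist (ψ s) (ψ t))


lemma volume_I01_univ : (volume : Measure I01) Set.univ = 1 := by
  rw [MeasureTheory.Measure.Subtype.volume_univ measurableSet_Ico.nullMeasurableSet,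
    Real.volume_Ico]
  norm_num

instance inst_s11 : IsProbabilityMeasure (volume : Measure I01) := ⟨volume_I01_univ⟩

lemma vol_squeeze {c : ℝ} (h0 : 0 ≤ c) {T : Set ℝ} (h1 : Set.Ioo 0 c ⊆ T) (h2 : T ⊆ Set.Icc 0 c) :
    volume T = ENNReal.ofReal c := by
  apply le_antisymm
  · calc volume T ≤ volume (Set.Icc 0 c) := measure_mono h2
      _ = ENNReal.ofReal c := by rw [Real.volume_Icc, sub_zero]
  · calc ENNReal.ofReal c = volume (Set.Ioo 0 c) := by rw [Real.volume_Ioo, sub_zero]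
      _ ≤ volume T := measure_mono h1

lemma exists_real_param (μ : Measure ℝ) [IsProbabilityMeasure μ] :
    ∃ h : I01 → ℝ, Measurable h ∧ volume.map h = μ := by
  classical
  set F := ProbabilityTheory.cdf μ with hFdef
  set A : ℝ → Set ℝ := fun t => {x | t ≤ F x} with hA
  have hne : ∀ t : ℝ, t < 1 → (A t).Nonempty := by
    intro t ht
    obtain ⟨x, hx⟩ := ((ProbabilityTheory.tendsto_cdf_atTop μ).eventually
      (eventually_ge_nhds ht)).exists
    exact ⟨x, hx⟩
  have hbdd : ∀ t : ℝ, 0 < t → BddBelow (A t) := by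
    intro t ht
    obtain ⟨x, hx⟩ := ((ProbabilityTheory.tendsto_cdf_atBot μ).eventually
      (eventually_lt_nhds ht)).exists
    refine ⟨x, fun y hy => ?_⟩
    by_contra hxy
    push_neg at hxy
    exact absurd (le_trans hy ((ProbabilityTheory.monotone_cdf μ) hxy.le)) (not_le.2 hx)
  have hmem : ∀ t : ℝ, 0 < t → t < 1 → t ≤ F (sInf (A t)) := by
    intro t h0 h1
    have h₁ : ∀ y ∈ Set.Ioi (sInf (A t)), t ≤ F y := by
      intro y hy
      obtain ⟨a, ha, hay⟩ := exists_lt_of_csInf_lt (hne t h1) hy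
      exact le_trans ha ((ProbabilityTheory.monotone_cdf μ) hay.le)
    have htend : Tendsto F (𝓝[>] (sInf (A t))) (𝓝 (F (sInf (A t)))) :=
      (F.right_continuous _).mono Ioi_subset_Ici_self
    exact ge_of_tendsto htend (eventually_nhdsWithin_of_forall h₁)
  set h : I01 → ℝ := fun s => sInf (A s.1) with hh
  have key : ∀ s : I01, 0 < s.1 → ∀ x : ℝ, (h s ≤ x ↔ s.1 ≤ F x) := by
    intro s hs x
    constructor
    · intro hx
      exact (hmem s.1 hs s.2.2).trans ((ProbabilityTheory.monotone_cdf μ) hx)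
    · intro hx
      exact csInf_le (hbdd _ hs) hx
  have h0 : ∀ s : I01, s.1 = 0 → h s = 0 := by
    intro s hs
    have hAs : A s.1 = Set.univ := by
      ext x
      simp only [hA, hs, Set.mem_setOf_eq, Set.mem_univ, iff_true]
      exact ProbabilityTheory.cdf_nonneg μ x
    have hnb : ¬ BddBelow (Set.univ : Set ℝ) := by
      rintro ⟨x, hx⟩
      have := hx (Set.mem_univ (x - 1))
      simp only [mem_lowerBounds] at *
      linarith
    simp only [hh, hAs]
    exact Real.sInf_of_not_bddBelow hnb
  have hpre : ∀ x : ℝ, h ⁻¹' Set.Iic x =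
      if 0 ≤ x then (Subtype.val ⁻¹' Set.Iic (F x) : Set I01)
      else Subtype.val ⁻¹' (Set.Iic (F x) ∩ Set.Ioi 0) := by
    intro x
    split_ifs with hx
    · ext s
      rcases eq_or_lt_of_le s.2.1 with hs | hs
      · simp only [Set.mem_preimage, Set.mem_Iic, h0 s hs.symm]
        constructor
        · intro _; rw [← hs]; exact ProbabilityTheory.cdf_nonneg μ x
        · intro _; exact hx
      · simpa only [Set.mem_preimage, Set.mem_Iic] using key s hs x
    · push_neg at hx
      ext s
      rcases eq_or_lt_of_le s.2.1 with hs | hs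
      · simp only [Set.mem_preimage, Set.mem_Iic, Set.mem_inter_iff, Set.mem_Ioi, h0 s hs.symm]
        constructor
        · intro hc; exact absurd hc (not_le.2 hx)
        · rintro ⟨-, hc⟩; rw [← hs] at hc; exact absurd hc (lt_irrefl _)
      · simp only [Set.mem_preimage, Set.mem_Iic, Set.mem_inter_iff, Set.mem_Ioi, key s hs x]
        exact ⟨fun hc => ⟨hc, hs⟩, fun hc => hc.1⟩
  have hmeas : Measurable h := by
    apply measurable_of_Iic
    intro x
    rw [hpre x]
    split_ifs with hx
    · exact measurable_subtype_coe measurableSet_Iic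
    · exact measurable_subtype_coe (measurableSet_Iic.inter measurableSet_Ioi)
  have hvol : ∀ x : ℝ, volume (h ⁻¹' Set.Iic x) = ENNReal.ofReal (F x) := by
    intro x
    have hc0 : 0 ≤ F x := ProbabilityTheory.cdf_nonneg μ x
    have hc1 : F x ≤ 1 := ProbabilityTheory.cdf_le_one μ x
    rw [hpre x]
    split_ifs with hx
    · rw [volume_preimage_coe measurableSet_Ico.nullMeasurableSet measurableSet_Iic]
      refine vol_squeeze hc0 ?_ ?_
      · rintro y ⟨hy0, hy1⟩
        exact ⟨hy1.le, hy0.le, lt_of_lt_of_le hy1 hc1⟩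
      · rintro y ⟨hy1, hy2, -⟩
        exact ⟨hy2, hy1⟩
    · rw [volume_preimage_coe measurableSet_Ico.nullMeasurableSet
        (measurableSet_Iic.inter measurableSet_Ioi)]
      refine vol_squeeze hc0 ?_ ?_
      · rintro y ⟨hy0, hy1⟩
        exact ⟨⟨hy1.le, hy0⟩, hy0.le, lt_of_lt_of_le hy1 hc1⟩
      · rintro y ⟨⟨hy1, hy2⟩, -, -⟩
        exact ⟨hy2.le, hy1⟩
  refine ⟨h, hmeas, ?_⟩
  have : IsProbabilityMeasure (volume.map h) :=
    Measure.isProbabilityMeasure_map hmeas.aemeasurable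
  refine MeasureTheory.Measure.ext_of_Iic (volume.map h) μ (fun x => ?_)
  rw [Measure.map_apply hmeas measurableSet_Iic, hvol x, ProbabilityTheory.ofReal_cdf]

lemma exists_param {Ω : Type*} [MeasurableSpace Ω] [StandardBorelSpace Ω] [Nonempty Ω]
    (π : Measure Ω) [IsProbabilityMeasure π] :
    ∃ Φ : I01 → Ω, Measurable Φ ∧ volume.map Φ = π := by
  obtain ⟨f, hf⟩ := exists_measurableEmbedding_real Ω
  obtain ⟨g, hg, hgf⟩ := hf.exists_measurable_extend measurable_id (fun _ => ‹Nonempty Ω›)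
  have : IsProbabilityMeasure (π.map f) := Measure.isProbabilityMeasure_map hf.measurable.aemeasurable
  obtain ⟨h, hh, hmap⟩ := exists_real_param (π.map f)
  refine ⟨g ∘ h, hg.comp hh, ?_⟩
  rw [← Measure.map_map hg hh, hmap, Measure.map_map hg hf.measurable, hgf, Measure.map_id]

theorem stmt11 {X : Type*} [MetricSpace X] [CompleteSpace X] [TopologicalSpace.SeparableSpace X]
    [MeasurableSpace X] [BorelSpace X] {Y : Type*} [MetricSpace Y] [CompleteSpace Y] [TopologicalSpace.SeparableSpace Y]
    [MeasurableSpace Y] [BorelSpace Y]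
    (mX : Measure X) (mY : Measure Y) [IsProbabilityMeasure mX] [IsProbabilityMeasure mY] :
    boxDist mX mY =
      ⨅ π ∈ {π : Measure (X × Y) | π.map Prod.fst = mX ∧ π.map Prod.snd = mY}, dism π := by
  have hXne : Nonempty X := by
    by_contra hc
    rw [not_nonempty_iff] at hc
    have h1 : mX Set.univ = 1 := measure_univ
    rw [Set.univ_eq_empty_iff.2 hc, measure_empty] at h1
    exact zero_ne_one h1
  have hYne : Nonempty Y := by
    by_contra hc
    rw [not_nonempty_iff] at hc
    have h1 : mY Set.univ = 1 := measure_univ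
    rw [Set.univ_eq_empty_iff.2 hc, measure_empty] at h1
    exact zero_ne_one h1
  apply le_antisymm
  · -- boxDist ≤ ⨅ π
    refine le_iInf₂ fun π hπ => ?_
    have hπprob : IsProbabilityMeasure π := by
      constructor
      have h1 : π.map Prod.fst Set.univ = 1 := by rw [hπ.1]; exact measure_univ
      rwa [Measure.map_apply measurable_fst MeasurableSet.univ, Set.preimage_univ] at h1
    obtain ⟨Φ, hΦm, hΦmap⟩ := exists_param π
    set φ : I01 → X := fun s => (Φ s).1 with hφdef
    set ψ : I01 → Y := fun s => (Φ s).2 with hψdef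
    have hφ : Measurable φ := measurable_fst.comp hΦm
    have hψ : Measurable ψ := measurable_snd.comp hΦm
    have hφmap : volume.map φ = mX := by
      rw [show φ = Prod.fst ∘ Φ from rfl, ← Measure.map_map measurable_fst hΦm, hΦmap, hπ.1]
    have hψmap : volume.map ψ = mY := by
      rw [show ψ = Prod.snd ∘ Φ from rfl, ← Measure.map_map measurable_snd hΦm, hΦmap, hπ.2]
    unfold boxDist
    refine iInf₂_le_of_le φ ⟨hφ, hφmap⟩ (iInf₂_le_of_le ψ ⟨hψ, hψmap⟩ ?_)
    unfold dism
    refine le_iInf₂ fun S hS => ?_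
    set v := max (disS S) (1 - π S) with hv
    by_cases hvtop : v = ⊤
    · rw [hvtop]; exact le_top
    · have hSne : S ≠ ∅ := by
        intro hc
        apply hvtop
        rw [eq_top_iff, hv]
        refine le_trans ?_ (le_max_left _ _)
        unfold disS
        rw [if_pos hc]
      have hπS : volume (Φ ⁻¹' S) = π S := by
        rw [← hΦmap, Measure.map_apply hΦm hS.measurableSet]
      unfold boxP
      refine iInf₂_le v ⟨Φ ⁻¹' S, hΦm hS.measurableSet, ?_, ?_⟩
      · rw [hπS]
        have h2 : 1 - π S ≤ v := le_max_right _ _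
        have h3 : π S ≤ 1 := prob_le_one
        calc 1 - v ≤ 1 - (1 - π S) := tsub_le_tsub_left h2 1
          _ ≤ π S := by
            rw [tsub_le_iff_right]
            rw [add_tsub_cancel_of_le h3]
      · intro s hs t ht
        have hd : ENNReal.ofReal |dist (φ s) (φ t) - dist (ψ s) (ψ t)| ≤ disS S := by
          unfold disS
          rw [if_neg hSne]
          exact le_iSup₂_of_le (Φ s) hs (le_iSup₂_of_le (Φ t) ht le_rfl)
        have hdv : ENNReal.ofReal |dist (φ s) (φ t) - dist (ψ s) (ψ t)| ≤ v :=
          hd.trans (le_max_left _ _)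
        calc |dist (φ s) (φ t) - dist (ψ s) (ψ t)|
            = (ENNReal.ofReal |dist (φ s) (φ t) - dist (ψ s) (ψ t)|).toReal :=
              (ENNReal.toReal_ofReal (abs_nonneg _)).symm
          _ ≤ v.toReal := ENNReal.toReal_mono hvtop hdv
  · -- ⨅ π ≤ boxDist
    unfold boxDist
    refine le_iInf₂ fun φ hφ => le_iInf₂ fun ψ hψ => ?_
    set Φ : I01 → X × Y := fun s => (φ s, ψ s) with hΦdef
    have hΦ : Measurable Φ := hφ.1.prodMk hψ.1
    set π := volume.map Φ with hπdef
    have hπmem : π ∈ {π : Measure (X × Y) | π.map Prod.fst = mX ∧ π.map Prod.snd = mY} := by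
      constructor
      · rw [hπdef, Measure.map_map measurable_fst hΦ]
        exact hφ.2
      · rw [hπdef, Measure.map_map measurable_snd hΦ]
        exact hψ.2
    refine iInf₂_le_of_le π hπmem ?_
    unfold boxP
    refine le_iInf₂ fun ε hε => ?_
    obtain ⟨I₀, hI₀m, hI₀v, hI₀d⟩ := hε
    by_cases hε1 : 1 ≤ ε
    · refine le_trans ?_ hε1
      obtain ⟨x⟩ := hXne
      obtain ⟨y⟩ := hYne
      unfold dism
      refine iInf₂_le_of_le {(x, y)} isClosed_singleton (max_le ?_ ?_)
      · unfold disS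
        rw [if_neg (Set.singleton_ne_empty _)]
        refine iSup₂_le fun p hp => iSup₂_le fun q hq => ?_
        rw [Set.mem_singleton_iff] at hp hq
        subst hp; subst hq
        simp
      · exact tsub_le_self
    · push_neg at hε1
      have hεtop : ε ≠ ⊤ := (hε1.trans ENNReal.one_lt_top).ne
      have hI₀ne : I₀.Nonempty := by
        rw [Set.nonempty_iff_ne_empty]
        intro hc
        rw [hc, measure_empty] at hI₀v
        have h0 : (1 : ℝ≥0∞) - ε = 0 := le_antisymm hI₀v (zero_le)
        rw [tsub_eq_zero_iff_le] at h0
        exact absurd h0 (not_le.2 hε1)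
      set T := Φ '' I₀ with hT
      set S := closure T with hS
      have hSclosed : IsClosed S := isClosed_closure
      have hTne : T.Nonempty := hI₀ne.image Φ
      have hSne : S ≠ ∅ := hTne.closure.ne_empty
      have habs : ∀ p ∈ S, ∀ q ∈ S, |dist p.1 q.1 - dist p.2 q.2| ≤ ε.toReal := by
        have hcont : Continuous fun pq : (X × Y) × (X × Y) =>
            |dist pq.1.1 pq.2.1 - dist pq.1.2 pq.2.2| := by fun_prop
        have hclosed : IsClosed {pq : (X × Y) × (X × Y) |
            |dist pq.1.1 pq.2.1 - dist pq.1.2 pq.2.2| ≤ ε.toReal} :=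
          isClosed_le hcont continuous_const
        have hsub : T ×ˢ T ⊆ {pq : (X × Y) × (X × Y) |
            |dist pq.1.1 pq.2.1 - dist pq.1.2 pq.2.2| ≤ ε.toReal} := by
          rintro ⟨p, q⟩ ⟨hp, hq⟩
          obtain ⟨s, hs, rfl⟩ := hp
          obtain ⟨t, ht, rfl⟩ := hq
          exact hI₀d s hs t ht
        intro p hp q hq
        have hmem : (p, q) ∈ closure (T ×ˢ T) := by
          rw [closure_prod_eq]
          exact ⟨hp, hq⟩
        exact hclosed.closure_subset_iff.2 hsub hmem
      unfold dism
      refine iInf₂_le_of_le S hSclosed (max_le ?_ ?_)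
      · unfold disS
        rw [if_neg hSne]
        refine iSup₂_le fun p hp => iSup₂_le fun q hq => ?_
        calc ENNReal.ofReal |dist p.1 q.1 - dist p.2 q.2|
            ≤ ENNReal.ofReal ε.toReal := ENNReal.ofReal_le_ofReal (habs p hp q hq)
          _ ≤ ε := ENNReal.ofReal_toReal_le
      · have hπS : 1 - ε ≤ π S := by
          rw [hπdef, Measure.map_apply hΦ hSclosed.measurableSet]
          exact le_trans hI₀v
            (measure_mono fun s hs => subset_closure (Set.mem_image_of_mem Φ hs))
        rw [tsub_le_iff_right]
        calc (1 : ℝ≥0∞) = (1 - ε) + ε := (tsub_add_cancel_of_le hε1.le).symm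
          _ ≤ π S + ε := add_le_add_left hπS _
          _ = ε + π S := add_comm _ _
end

section
/- Let X and Y be metric spaces and f, g : X → Y two 1-Lipschitz maps. For any Borel probability measures μ, ν on X, |d_KF^μ(f,g) − d_KF^ν(f,g)| ≤ 2·d_P(μ,ν), where the Ky Fan distance between f and g is taken with respect to the function x ↦ d_Y(f(x),g(x)). -/
open MeasureTheory Metric EMetric Set Filter Topology ENNReal

noncomputable def kyfan {X Y : Type*} [PseudoMetricSpace Y] [MeasurableSpace X]
    (μ : Measure X) (f g : X → Y) : ℝ≥0∞ :=
  ⨅ ε ∈ {ε : ℝ≥0∞ | μ {x | ε < ENNReal.ofReal (dist (f x) (g x))} ≤ ε}, ε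

noncomputable def prohorov {X : Type*} [PseudoMetricSpace X] [MeasurableSpace X]
    (μ ν : Measure X) : ℝ≥0∞ :=
  ⨅ ε ∈ {ε : ℝ≥0∞ | ∀ A : Set X, ν A ≤ μ (Metric.thickening ε.toReal A) + ε}, ε

lemma pro_sym {X : Type*} [MetricSpace X] [MeasurableSpace X] [BorelSpace X]
    (μ ν : Measure X) [IsProbabilityMeasure μ] [IsProbabilityMeasure ν]
    (ε : ℝ≥0∞) (hε : ∀ A : Set X, ν A ≤ μ (Metric.thickening ε.toReal A) + ε) :
    ∀ A : Set X, μ A ≤ ν (Metric.thickening ε.toReal A) + ε := by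
  intro A
  set t := ε.toReal with ht
  set S := Metric.thickening t (Metric.thickening t A)ᶜ with hS
  have hSA : S ⊆ Aᶜ := by
    intro x hx hxA
    rcases Metric.mem_thickening_iff.1 hx with ⟨b, hb, hdb⟩
    exact hb (Metric.mem_thickening_iff.2 ⟨x, hxA, by rwa [dist_comm]⟩)
  have hSm : MeasurableSet S := Metric.isOpen_thickening.measurableSet
  have hsum : μ A + μ S ≤ 1 := by
    have h := measure_inter_add_diff (μ := μ) (A ∪ S) hSm
    have h1 : (A ∪ S) ∩ S = S := Set.inter_eq_right.2 subset_union_right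
    have h2 : (A ∪ S) \ S = A := by
      ext x
      simp only [Set.mem_diff, Set.mem_union]
      constructor
      · rintro ⟨h1 | h1, h2⟩ <;> tauto
      · intro hx; exact ⟨Or.inl hx, fun hxS => hSA hxS hx⟩
    rw [h1, h2] at h
    calc μ A + μ S = μ (A ∪ S) := by rw [← h, add_comm]
      _ ≤ 1 := prob_le_one
  have h2 : ν (Metric.thickening t A) + ν (Metric.thickening t A)ᶜ = 1 :=
    (measure_add_measure_compl Metric.isOpen_thickening.measurableSet).trans measure_univ
  have h3 : ν (Metric.thickening t A)ᶜ ≤ μ S + ε := hε _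
  have key : μ A + μ S ≤ (ν (Metric.thickening t A) + ε) + μ S := by
    calc μ A + μ S ≤ 1 := hsum
      _ = ν (Metric.thickening t A) + ν (Metric.thickening t A)ᶜ := h2.symm
      _ ≤ ν (Metric.thickening t A) + (μ S + ε) := add_le_add_right h3 _
      _ = (ν (Metric.thickening t A) + ε) + μ S := by ring
  exact (ENNReal.add_le_add_iff_right (measure_ne_top μ S)).1 key

lemma ky_mem {X Y : Type*} [MetricSpace X] [MetricSpace Y]
    [MeasurableSpace X] [BorelSpace X]
    (f g : X → Y) (hf : LipschitzWith 1 f) (hg : LipschitzWith 1 g)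
    (μ ν : Measure X) (ε α : ℝ≥0∞)
    (hε : ∀ A : Set X, ν A ≤ μ (Metric.thickening ε.toReal A) + ε)
    (hα : μ {x | α < ENNReal.ofReal (dist (f x) (g x))} ≤ α) :
    ν {x | α + 2 * ε < ENNReal.ofReal (dist (f x) (g x))} ≤ α + 2 * ε := by
  by_cases htop : α + 2 * ε = ∞
  · rw [htop]; exact le_top
  have h2ε : 2 * ε ≠ ∞ := fun h => htop (by simp [h])
  have hεt : ε ≠ ∞ := fun h => h2ε (by simp [h])
  set A := {x | α + 2 * ε < ENNReal.ofReal (dist (f x) (g x))} with hA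
  have hsub : Metric.thickening ε.toReal A ⊆
      {x | α < ENNReal.ofReal (dist (f x) (g x))} := by
    intro x hx
    rcases Metric.mem_thickening_iff.1 hx with ⟨a, ha, hda⟩
    have h1 : dist (f a) (g a) ≤ dist (f x) (g x) + 2 * dist x a := by
      have hfa : dist (f a) (f x) ≤ dist a x := by
        have := hf.dist_le_mul a x; simpa using this
      have hga : dist (g x) (g a) ≤ dist x a := by
        have := hg.dist_le_mul x a; simpa using this
      calc dist (f a) (g a) ≤ dist (f a) (f x) + dist (f x) (g x) + dist (g x) (g a) :=
            dist_triangle4 _ _ _ _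
        _ ≤ dist a x + dist (f x) (g x) + dist x a := by
            gcongr
        _ = dist (f x) (g x) + 2 * dist x a := by rw [dist_comm a x]; ring
    have h2 : ENNReal.ofReal (dist x a) ≤ ε :=
      ENNReal.ofReal_le_of_le_toReal hda.le
    have h3 : α + 2 * ε < ENNReal.ofReal (dist (f x) (g x)) + 2 * ε := by
      calc α + 2 * ε < ENNReal.ofReal (dist (f a) (g a)) := ha
        _ ≤ ENNReal.ofReal (dist (f x) (g x) + 2 * dist x a) := ENNReal.ofReal_le_ofReal h1
        _ ≤ ENNReal.ofReal (dist (f x) (g x)) + ENNReal.ofReal (2 * dist x a) :=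
            ENNReal.ofReal_add_le
        _ = ENNReal.ofReal (dist (f x) (g x)) + 2 * ENNReal.ofReal (dist x a) := by
            rw [ENNReal.ofReal_mul (by norm_num)]
            norm_num
        _ ≤ ENNReal.ofReal (dist (f x) (g x)) + 2 * ε := by gcongr
    exact (ENNReal.add_lt_add_iff_right h2ε).1 h3
  calc ν A ≤ μ (Metric.thickening ε.toReal A) + ε := hε A
    _ ≤ μ {x | α < ENNReal.ofReal (dist (f x) (g x))} + ε := by
        exact add_le_add_left (measure_mono hsub) ε
    _ ≤ α + ε := add_le_add_left hα _
    _ ≤ α + 2 * ε := by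
        gcongr
        calc ε = 1 * ε := (one_mul ε).symm
          _ ≤ 2 * ε := mul_le_mul_left one_le_two ε

lemma ky_diff {X Y : Type*} [MetricSpace X] [MetricSpace Y]
    [MeasurableSpace X] [BorelSpace X]
    (f g : X → Y) (hf : LipschitzWith 1 f) (hg : LipschitzWith 1 g)
    (μ ν : Measure X)
    (h : ∀ ε ∈ {ε : ℝ≥0∞ | ∀ A : Set X, ν A ≤ μ (Metric.thickening ε.toReal A) + ε},
      ∀ α ∈ {ε : ℝ≥0∞ | μ {x | ε < ENNReal.ofReal (dist (f x) (g x))} ≤ ε},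
      kyfan ν f g ≤ α + 2 * ε) :
    kyfan ν f g ≤ kyfan μ f g +
      2 * ⨅ ε ∈ {ε : ℝ≥0∞ | ∀ A : Set X, ν A ≤ μ (Metric.thickening ε.toReal A) + ε}, ε := by
  set P := {ε : ℝ≥0∞ | ∀ A : Set X, ν A ≤ μ (Metric.thickening ε.toReal A) + ε} with hP
  have step1 : ∀ ε ∈ P, kyfan ν f g ≤ kyfan μ f g + 2 * ε := by
    intro ε hε
    have : kyfan ν f g - 2 * ε ≤ kyfan μ f g :=
      le_iInf₂ fun α hα => tsub_le_iff_right.2 (h ε hε α hα)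
    calc kyfan ν f g ≤ (kyfan ν f g - 2 * ε) + 2 * ε := le_tsub_add
      _ ≤ kyfan μ f g + 2 * ε := add_le_add_left this _
  have step2 : (kyfan ν f g - kyfan μ f g) / 2 ≤ ⨅ ε ∈ P, ε := by
    refine le_iInf₂ fun ε hε => ?_
    rw [ENNReal.div_le_iff_le_mul (Or.inl two_ne_zero) (Or.inl ENNReal.ofNat_ne_top)]
    rw [mul_comm]
    exact tsub_le_iff_right.2 (by rw [add_comm]; exact step1 ε hε)
  have step3 : kyfan ν f g - kyfan μ f g ≤ 2 * ⨅ ε ∈ P, ε := by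
    rw [mul_comm]
    rw [← ENNReal.div_le_iff_le_mul (Or.inl two_ne_zero) (Or.inl ENNReal.ofNat_ne_top)]
    exact step2
  calc kyfan ν f g ≤ (kyfan ν f g - kyfan μ f g) + kyfan μ f g := le_tsub_add
    _ ≤ 2 * (⨅ ε ∈ P, ε) + kyfan μ f g := add_le_add_left step3 _
    _ = kyfan μ f g + 2 * ⨅ ε ∈ P, ε := add_comm _ _

theorem stmt15 {X Y : Type*} [MetricSpace X] [MetricSpace Y]
    [MeasurableSpace X] [BorelSpace X]
    (f g : X → Y) (hf : LipschitzWith 1 f) (hg : LipschitzWith 1 g)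
    (μ ν : Measure X) [IsProbabilityMeasure μ] [IsProbabilityMeasure ν] :
    kyfan μ f g ≤ kyfan ν f g + 2 * prohorov μ ν ∧
    kyfan ν f g ≤ kyfan μ f g + 2 * prohorov μ ν := by
  have hd : ∀ (μ ν : Measure X), ∀ _ : IsProbabilityMeasure μ, ∀ _ : IsProbabilityMeasure ν,
      kyfan ν f g ≤ kyfan μ f g + 2 * prohorov μ ν := by
    intro μ ν _ _
    rw [prohorov]
    refine ky_diff f g hf hg μ ν fun ε hε α hα => ?_
    rw [kyfan]
    exact iInf_le_of_le (α + 2 * ε) (iInf_le_of_le (ky_mem f g hf hg μ ν ε α hε hα) le_rfl)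
  refine ⟨?_, hd μ ν ‹_› ‹_›⟩
  have hsym : prohorov ν μ ≤ prohorov μ ν := by
    rw [prohorov, prohorov]
    refine le_iInf fun ε => le_iInf fun hε => ?_
    exact iInf_le_of_le ε (iInf_le_of_le (pro_sym μ ν ε hε) le_rfl)
  calc kyfan μ f g ≤ kyfan ν f g + 2 * prohorov ν μ := hd ν μ ‹_› ‹_›
    _ ≤ kyfan ν f g + 2 * prohorov μ ν := by gcongr
end

section
/- Let X and Y be mm-spaces. If there exists a coupling π of m_X and m_Y with dis(supp π) = 0, then X and Y are mm-isomorphic, i.e., there is a measure-preserving isometry from supp m_X onto supp m_Y. -/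
open MeasureTheory Metric EMetric Set Filter Topology ENNReal

def msupp {X : Type*} [TopologicalSpace X] [MeasurableSpace X] (mu : Measure X) : Set X :=
  {x | forall U : Set X, IsOpen U -> x ∈ U -> 0 < mu U}

lemma msupp_isClosed {X : Type*} [TopologicalSpace X] [MeasurableSpace X] (μ : Measure X) :
    IsClosed (msupp μ) := by
  rw [← isOpen_compl_iff, isOpen_iff_forall_mem_open]
  intro x hx
  simp only [msupp, mem_compl_iff, mem_setOf_eq] at hx
  push_neg at hx
  obtain ⟨U, hU, hxU, hμ⟩ := hx
  exact ⟨U, fun u hu hmem => absurd (hmem U hU hu) (by simpa using hμ), hU, hxU⟩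

lemma msupp_compl_null {X : Type*} [TopologicalSpace X]
    [SecondCountableTopology X] [MeasurableSpace X] (μ : Measure X) :
    μ (msupp μ)ᶜ = 0 := by
  obtain ⟨b, hbc, -, hb⟩ := TopologicalSpace.exists_countable_basis X
  have h1 : μ (⋃₀ {U ∈ b | μ U = 0}) = 0 :=
    (measure_sUnion_null_iff (hbc.mono (sep_subset _ _))).2 (fun s hs => hs.2)
  refine measure_mono_null ?_ h1
  intro x hx
  simp only [msupp, mem_compl_iff, mem_setOf_eq] at hx
  push_neg at hx
  obtain ⟨U, hU, hxU, hμ⟩ := hx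
  have hμ0 : μ U = 0 := le_antisymm (by simpa using hμ) zero_le
  obtain ⟨V, hVb, hxV, hVU⟩ := hb.exists_subset_of_mem_open hxU hU
  exact ⟨V, ⟨hVb, le_antisymm ((measure_mono hVU).trans hμ0.le) zero_le⟩, hxV⟩

lemma exists_pair_mem {X Y : Type*} [MetricSpace X] [MetricSpace Y] [CompleteSpace Y]
    {S : Set (X × Y)} (hS : IsClosed S)
    (hiso : ∀ p ∈ S, ∀ q ∈ S, dist p.1 q.1 = dist p.2 q.2)
    {x : X} (hx : ∀ ε : ℝ, 0 < ε → ∃ p ∈ S, dist p.1 x < ε) :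
    ∃ y, (x, y) ∈ S := by
  have hex : ∀ n : ℕ, ∃ p ∈ S, dist p.1 x < 1 / (n + 1) := fun n => hx _ (by positivity)
  choose p hpS hpd using hex
  have hcauchy : CauchySeq fun n => (p n).2 := by
    apply cauchySeq_of_le_tendsto_0 (fun N : ℕ => 2 / ((N : ℝ) + 1))
    · intro n m N hn hm
      rw [← hiso _ (hpS n) _ (hpS m)]
      have ht := dist_triangle (p n).1 x (p m).1
      have h1 := hpd n
      have h2 := hpd m
      have hdm : dist (p m).1 x = dist x (p m).1 := dist_comm _ _
      have e1 : (1 : ℝ) / (n + 1) ≤ 1 / (N + 1) := by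
        apply one_div_le_one_div_of_le (by positivity)
        have : (N : ℝ) ≤ n := Nat.cast_le.2 hn
        linarith
      have e2 : (1 : ℝ) / (m + 1) ≤ 1 / (N + 1) := by
        apply one_div_le_one_div_of_le (by positivity)
        have : (N : ℝ) ≤ m := Nat.cast_le.2 hm
        linarith
      have : (2 : ℝ) / (N + 1) = 1 / (N + 1) + 1 / (N + 1) := by ring
      rw [this]
      linarith
    · have := tendsto_one_div_add_atTop_nhds_zero_nat.const_mul (2 : ℝ)
      simpa [mul_one_div, div_eq_mul_inv] using this
  obtain ⟨y, hy⟩ := cauchySeq_tendsto_of_complete hcauchy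
  have hx1 : Tendsto (fun n => (p n).1) atTop (𝓝 x) := by
    rw [tendsto_iff_dist_tendsto_zero]
    exact squeeze_zero (fun n => dist_nonneg) (fun n => (hpd n).le)
      tendsto_one_div_add_atTop_nhds_zero_nat
  have hconv : Tendsto p atTop (𝓝 (x, y)) := hx1.prodMk_nhds hy
  exact ⟨y, hS.mem_of_tendsto hconv (Eventually.of_forall hpS)⟩

theorem stmt17 {X : Type*} [MetricSpace X] [CompleteSpace X] [TopologicalSpace.SeparableSpace X]
    [MeasurableSpace X] [BorelSpace X] {Y : Type*} [MetricSpace Y] [CompleteSpace Y] [TopologicalSpace.SeparableSpace Y]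
    [MeasurableSpace Y] [BorelSpace Y]
    (mX : Measure X) (mY : Measure Y) [IsProbabilityMeasure mX] [IsProbabilityMeasure mY]
    (π : Measure (X × Y)) [IsProbabilityMeasure π]
    (h1 : π.map Prod.fst = mX) (h2 : π.map Prod.snd = mY)
    (h : disS (msupp π) = 0) :
    ∃ f : X → Y,
      (∀ x ∈ msupp mX, f x ∈ msupp mY) ∧
      (∀ x ∈ msupp mX, ∀ x' ∈ msupp mX, dist (f x) (f x') = dist x x') ∧
      (∀ y ∈ msupp mY, ∃ x ∈ msupp mX, f x = y) ∧
      (∀ B : Set Y, MeasurableSet B → mX {x | x ∈ msupp mX ∧ f x ∈ B} = mY B) := by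
  classical
  set S : Set (X × Y) := msupp π with hSdef
  have hS_closed : IsClosed S := msupp_isClosed π
  have hS_ne : S ≠ ∅ := by
    intro hE
    rw [disS, if_pos hE] at h
    exact top_ne_zero h
  have hiso : ∀ p ∈ S, ∀ q ∈ S, dist p.1 q.1 = dist p.2 q.2 := by
    intro p hp q hq
    have hle : ENNReal.ofReal |dist p.1 q.1 - dist p.2 q.2| ≤ disS S := by
      rw [disS, if_neg hS_ne]
      have step1 : ENNReal.ofReal |dist p.1 q.1 - dist p.2 q.2|
          ≤ ⨆ q' ∈ S, ENNReal.ofReal |dist p.1 q'.1 - dist p.2 q'.2| :=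
        le_iSup₂ (f := fun (q' : X × Y) (_ : q' ∈ S) =>
          ENNReal.ofReal |dist p.1 q'.1 - dist p.2 q'.2|) q hq
      have step2 : (⨆ q' ∈ S, ENNReal.ofReal |dist p.1 q'.1 - dist p.2 q'.2|)
          ≤ ⨆ p' ∈ S, ⨆ q' ∈ S, ENNReal.ofReal |dist p'.1 q'.1 - dist p'.2 q'.2| :=
        le_iSup₂ (f := fun (p' : X × Y) (_ : p' ∈ S) =>
          ⨆ q' ∈ S, ENNReal.ofReal |dist p'.1 q'.1 - dist p'.2 q'.2|) p hp
      exact step1.trans step2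
    rw [h] at hle
    have h0 : |dist p.1 q.1 - dist p.2 q.2| ≤ 0 := by
      have := le_zero_iff.1 hle
      rwa [ENNReal.ofReal_eq_zero] at this
    have := abs_nonneg (dist p.1 q.1 - dist p.2 q.2)
    have habs : |dist p.1 q.1 - dist p.2 q.2| = 0 := le_antisymm h0 this
    rw [abs_eq_zero, sub_eq_zero] at habs
    exact habs
  have hπS : π Sᶜ = 0 := msupp_compl_null π
  have hpos : ∀ V : Set (X × Y), 0 < π V → ∃ p ∈ S, p ∈ V := by
    intro V hVpos
    by_contra hcon
    push_neg at hcon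
    have hsub : V ⊆ Sᶜ := fun q hq hqS => hcon q hqS hq
    exact absurd (measure_mono_null hsub hπS) hVpos.ne'
  have hmXU : ∀ U : Set X, IsOpen U → mX U = π (Prod.fst ⁻¹' U) := by
    intro U hU
    rw [← h1, Measure.map_apply measurable_fst hU.measurableSet]
  have hmYU : ∀ U : Set Y, IsOpen U → mY U = π (Prod.snd ⁻¹' U) := by
    intro U hU
    rw [← h2, Measure.map_apply measurable_snd hU.measurableSet]
  have hfst_mem : ∀ p ∈ S, p.1 ∈ msupp mX := by
    intro p hp U hU hxU
    rw [hmXU U hU]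
    exact hp _ (hU.preimage continuous_fst) hxU
  have hsnd_mem : ∀ p ∈ S, p.2 ∈ msupp mY := by
    intro p hp U hU hxU
    rw [hmYU U hU]
    exact hp _ (hU.preimage continuous_snd) hxU
  have existsA : ∀ x ∈ msupp mX, ∃ y, (x, y) ∈ S := by
    intro x hx
    refine exists_pair_mem hS_closed hiso ?_
    intro ε hε
    have hball : 0 < mX (ball x ε) := hx _ Metric.isOpen_ball (mem_ball_self hε)
    rw [hmXU _ Metric.isOpen_ball] at hball
    obtain ⟨p, hpS, hpV⟩ := hpos _ hball
    exact ⟨p, hpS, mem_ball.1 hpV⟩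
  have existsC : ∀ y ∈ msupp mY, ∃ x, (x, y) ∈ S := by
    intro y hy
    have hS'closed : IsClosed (Prod.swap ⁻¹' S : Set (Y × X)) :=
      hS_closed.preimage continuous_swap
    have hiso' : ∀ p ∈ (Prod.swap ⁻¹' S : Set (Y × X)), ∀ q ∈ (Prod.swap ⁻¹' S : Set (Y × X)),
        dist p.1 q.1 = dist p.2 q.2 := by
      intro p hp q hq
      exact (hiso _ hp _ hq).symm
    have hdense : ∀ ε : ℝ, 0 < ε → ∃ p ∈ (Prod.swap ⁻¹' S : Set (Y × X)), dist p.1 y < ε := by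
      intro ε hε
      have hball : 0 < mY (ball y ε) := hy _ Metric.isOpen_ball (mem_ball_self hε)
      rw [hmYU _ Metric.isOpen_ball] at hball
      obtain ⟨p, hpS, hpV⟩ := hpos _ hball
      exact ⟨p.swap, hpS, mem_ball.1 hpV⟩
    obtain ⟨x, hx⟩ := exists_pair_mem hS'closed hiso' hdense
    exact ⟨x, hx⟩
  have huniq : ∀ x y y', (x, y) ∈ S → (x, y') ∈ S → y = y' := by
    intro x y y' hxy hxy'
    have := (hiso _ hxy _ hxy').symm
    simp only [dist_self] at this
    exact dist_eq_zero.1 this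
  have hY : Nonempty Y := by
    by_contra hne
    rw [not_nonempty_iff] at hne
    have : mY univ = 0 := by rw [Set.univ_eq_empty_iff.2 hne]; exact measure_empty
    simp [measure_univ] at this
  set f : X → Y := fun x => if hx : ∃ y, (x, y) ∈ S then hx.choose else hY.some with hfdef
  have hfS : ∀ x ∈ msupp mX, (x, f x) ∈ S := by
    intro x hx
    have hex : ∃ y, (x, y) ∈ S := existsA x hx
    have : f x = hex.choose := by rw [hfdef]; simp [dif_pos hex]
    rw [this]
    exact hex.choose_spec
  refine ⟨f, ?_, ?_, ?_, ?_⟩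
  · intro x hx
    exact hsnd_mem _ (hfS x hx)
  · intro x hx x' hx'
    exact (hiso _ (hfS x hx) _ (hfS x' hx')).symm
  · intro y hy
    obtain ⟨x, hxy⟩ := existsC y hy
    have hxX : x ∈ msupp mX := hfst_mem _ hxy
    exact ⟨x, hxX, huniq x _ _ (hfS x hxX) hxy⟩
  · intro B hB
    set A : Set X := {x | x ∈ msupp mX ∧ f x ∈ B} with hAdef
    have hsX_meas : MeasurableSet (msupp mX) := (msupp_isClosed mX).measurableSet
    have hlip : LipschitzOnWith 1 f (msupp mX) := by
      intro a ha b hb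
      have := (hiso _ (hfS a ha) _ (hfS b hb)).symm
      rw [edist_dist, edist_dist, this]
      simp
    have hA_meas : MeasurableSet A := by
      have hg : Continuous ((msupp mX).restrict f) :=
        continuousOn_iff_continuous_restrict.1 hlip.continuousOn
      have : A = Subtype.val '' ((msupp mX).restrict f ⁻¹' B) := by
        ext a
        simp only [hAdef, mem_setOf_eq, mem_image, Set.restrict, mem_preimage, Subtype.exists,
          exists_and_right, exists_eq_right]
        constructor
        · rintro ⟨ha, hfa⟩; exact ⟨ha, hfa⟩
        · rintro ⟨ha, hfa⟩; exact ⟨ha, hfa⟩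
      rw [this]
      exact (MeasurableEmbedding.subtype_coe hsX_meas).measurableSet_image.2
        (hg.measurable hB)
    have e1 : mX A = π (Prod.fst ⁻¹' A) := by
      rw [← h1, Measure.map_apply measurable_fst hA_meas]
    have e2 : mY B = π (Prod.snd ⁻¹' B) := by
      rw [← h2, Measure.map_apply measurable_snd hB]
    rw [e1, e2]
    apply measure_congr
    have key : ∀ p ∈ S, (p ∈ Prod.fst ⁻¹' A ↔ p ∈ Prod.snd ⁻¹' B) := by
      intro p hp
      have hp1 : p.1 ∈ msupp mX := hfst_mem _ hp
      have hfp : f p.1 = p.2 := huniq p.1 _ _ (hfS p.1 hp1) hp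
      simp only [mem_preimage, hAdef, mem_setOf_eq, hfp]
      exact ⟨fun ⟨_, hb⟩ => hb, fun hb => ⟨hp1, hb⟩⟩
    rw [Filter.eventuallyEq_set, ae_iff]
    refine measure_mono_null ?_ hπS
    intro p hp hpS
    exact hp (key p hpS)
end

section
/- The box distance satisfies the triangle inequality: for any three mm-spaces X, Y, Z, □(X,Z) ≤ □(X,Y) + □(Y,Z). -/
open MeasureTheory Metric EMetric Set Filter Topology ENNReal

noncomputable def boxDistC {X Y : Type*} [MetricSpace X] [MetricSpace Y]
    [MeasurableSpace X] [MeasurableSpace Y] (mX : Measure X) (mY : Measure Y) : ℝ≥0∞ :=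
  ⨅ π ∈ {π : Measure (X × Y) | π.map Prod.fst = mX ∧ π.map Prod.snd = mY}, dism π

open ProbabilityTheory

section Aux

lemma le_iInf_add_iInf' {ι κ : Sort*} {f : ι → ℝ≥0∞} {g : κ → ℝ≥0∞} {a : ℝ≥0∞}
    (h : ∀ i j, a ≤ f i + g j) : a ≤ iInf f + iInf g := by
  simp_rw [ENNReal.iInf_add, ENNReal.add_iInf]
  exact le_iInf fun i => le_iInf fun j => h i j

lemma disS_le_of_mem' {X Y : Type*} [PseudoMetricSpace X] [PseudoMetricSpace Y]
    {S : Set (X × Y)} {p q : X × Y} (hp : p ∈ S) (hq : q ∈ S) :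
    ENNReal.ofReal |dist p.1 q.1 - dist p.2 q.2| ≤ disS S := by
  rw [disS, if_neg (Nonempty.ne_empty ⟨p, hp⟩)]
  exact le_iSup₂_of_le p hp (le_iSup₂_of_le q hq le_rfl)

lemma disS_comp_le' {X Y Z : Type*} [MetricSpace X] [MetricSpace Y] [MetricSpace Z]
    {S1 : Set (X × Y)} {S2 : Set (Y × Z)}
    (hne : ({p : X × Z | ∃ y, (p.1, y) ∈ S1 ∧ (y, p.2) ∈ S2}).Nonempty) :
    disS (closure {p : X × Z | ∃ y, (p.1, y) ∈ S1 ∧ (y, p.2) ∈ S2}) ≤ disS S1 + disS S2 := by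
  set A := {p : X × Z | ∃ y, (p.1, y) ∈ S1 ∧ (y, p.2) ∈ S2} with hA
  set C := disS S1 + disS S2 with hC
  rcases eq_or_ne C ⊤ with h | hCt
  · exact h ▸ le_top
  have h1t : disS S1 ≠ ⊤ := fun h => hCt (by simp [hC, h])
  have h2t : disS S2 ≠ ⊤ := fun h => hCt (by simp [hC, h])
  have hbA : ∀ p ∈ A, ∀ q ∈ A, |dist p.1 q.1 - dist p.2 q.2| ≤ C.toReal := by
    rintro p ⟨y, hp1, hp2⟩ q ⟨y', hq1, hq2⟩
    have e1 : |dist p.1 q.1 - dist y y'| ≤ (disS S1).toReal :=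
      (ENNReal.ofReal_le_iff_le_toReal h1t).mp (disS_le_of_mem' hp1 hq1)
    have e2 : |dist y y' - dist p.2 q.2| ≤ (disS S2).toReal :=
      (ENNReal.ofReal_le_iff_le_toReal h2t).mp (disS_le_of_mem' hp2 hq2)
    have htri : |dist p.1 q.1 - dist p.2 q.2|
        ≤ |dist p.1 q.1 - dist y y'| + |dist y y' - dist p.2 q.2| := by
      calc |dist p.1 q.1 - dist p.2 q.2|
          = |(dist p.1 q.1 - dist y y') + (dist y y' - dist p.2 q.2)| := by ring_nf
        _ ≤ _ := abs_add_le _ _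
    calc |dist p.1 q.1 - dist p.2 q.2| ≤ _ := htri
      _ ≤ (disS S1).toReal + (disS S2).toReal := add_le_add e1 e2
      _ = C.toReal := (ENNReal.toReal_add h1t h2t).symm
  have hcl : ∀ p ∈ closure A, ∀ q ∈ closure A, |dist p.1 q.1 - dist p.2 q.2| ≤ C.toReal := by
    have hcont : Continuous fun pq : (X × Z) × (X × Z) =>
        |dist pq.1.1 pq.2.1 - dist pq.1.2 pq.2.2| := by fun_prop
    have hK : IsClosed {pq : (X × Z) × (X × Z) |
        |dist pq.1.1 pq.2.1 - dist pq.1.2 pq.2.2| ≤ C.toReal} :=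
      isClosed_le hcont continuous_const
    have hsub : A ×ˢ A ⊆ {pq : (X × Z) × (X × Z) |
        |dist pq.1.1 pq.2.1 - dist pq.1.2 pq.2.2| ≤ C.toReal} :=
      fun pq hpq => hbA _ hpq.1 _ hpq.2
    intro p hp q hq
    have hmem : (p, q) ∈ closure (A ×ˢ A) := by
      rw [closure_prod_eq]; exact ⟨hp, hq⟩
    exact (hK.closure_subset_iff.mpr hsub) hmem
  rw [disS, if_neg (Nonempty.ne_empty (hne.closure))]
  refine iSup₂_le fun p hp => iSup₂_le fun q hq => ?_
  calc ENNReal.ofReal |dist p.1 q.1 - dist p.2 q.2| ≤ ENNReal.ofReal C.toReal :=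
        ENNReal.ofReal_le_ofReal (hcl p hp q hq)
    _ = C := ENNReal.ofReal_toReal hCt

lemma map_compProd_prod_fst {α β γ : Type*} [MeasurableSpace α] [MeasurableSpace β]
    [MeasurableSpace γ] (μ : Measure α) [SFinite μ] (κ : Kernel α β) (η : Kernel α γ)
    [IsMarkovKernel κ] [IsMarkovKernel η] :
    (μ ⊗ₘ (κ ×ₖ η)).map (fun p => (p.1, p.2.1)) = μ ⊗ₘ κ := by
  ext s hs
  rw [Measure.map_apply (by fun_prop) hs,
    Measure.compProd_apply (hs.preimage (by fun_prop)), Measure.compProd_apply hs]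
  refine lintegral_congr fun a => ?_
  rw [show (Prod.mk a ⁻¹' ((fun p : α × β × γ => (p.1, p.2.1)) ⁻¹' s))
      = {p : β × γ | p.1 ∈ Prod.mk a ⁻¹' s} from rfl,
    ← Kernel.fst_apply' _ _ (measurable_prodMk_left hs), Kernel.fst_prod]

lemma map_compProd_prod_snd {α β γ : Type*} [MeasurableSpace α] [MeasurableSpace β]
    [MeasurableSpace γ] (μ : Measure α) [SFinite μ] (κ : Kernel α β) (η : Kernel α γ)
    [IsMarkovKernel κ] [IsMarkovKernel η] :
    (μ ⊗ₘ (κ ×ₖ η)).map (fun p => (p.1, p.2.2)) = μ ⊗ₘ η := by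
  ext s hs
  rw [Measure.map_apply (by fun_prop) hs,
    Measure.compProd_apply (hs.preimage (by fun_prop)), Measure.compProd_apply hs]
  refine lintegral_congr fun a => ?_
  rw [show (Prod.mk a ⁻¹' ((fun p : α × β × γ => (p.1, p.2.2)) ⁻¹' s))
      = (Prod.snd : β × γ → γ) ⁻¹' (Prod.mk a ⁻¹' s) from rfl,
    ← Kernel.snd_apply' _ _ (measurable_prodMk_left hs), Kernel.snd_prod]

variable {X : Type*} [MetricSpace X] [CompleteSpace X] [TopologicalSpace.SeparableSpace X]
    [MeasurableSpace X] [BorelSpace X] {Y : Type*} [MetricSpace Y] [CompleteSpace Y]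
    [TopologicalSpace.SeparableSpace Y] [MeasurableSpace Y] [BorelSpace Y]
    {Z : Type*} [MetricSpace Z] [CompleteSpace Z] [TopologicalSpace.SeparableSpace Z]
    [MeasurableSpace Z] [BorelSpace Z]

set_option linter.unusedSectionVars false
set_option linter.deprecated false

lemma glue_couplings (mX : Measure X) (mY : Measure Y) (mZ : Measure Z)
    [IsProbabilityMeasure mX] [IsProbabilityMeasure mY] [IsProbabilityMeasure mZ]
    (π1 : Measure (X × Y)) (π2 : Measure (Y × Z))
    (h1f : π1.map Prod.fst = mX) (h1s : π1.map Prod.snd = mY)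
    (h2f : π2.map Prod.fst = mY) (h2s : π2.map Prod.snd = mZ) :
    ∃ π : Measure (X × Y × Z), IsProbabilityMeasure π ∧
      π.map (fun t => (t.1, t.2.1)) = π1 ∧ π.map Prod.snd = π2 := by
  haveI : IsProbabilityMeasure π1 := by
    constructor
    rw [← preimage_univ (f := @Prod.fst X Y), ← Measure.map_apply measurable_fst .univ, h1f,
      measure_univ]
  haveI : IsProbabilityMeasure π2 := by
    constructor
    rw [← preimage_univ (f := @Prod.fst Y Z), ← Measure.map_apply measurable_fst .univ, h2f,
      measure_univ]
  have hX : Nonempty X := by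
    by_contra h
    rw [not_nonempty_iff] at h
    have h1 : mX univ = 1 := measure_univ
    rw [Set.univ_eq_empty_iff.mpr h, measure_empty] at h1
    exact zero_ne_one h1
  have hZ : Nonempty Z := by
    by_contra h
    rw [not_nonempty_iff] at h
    have h1 : mZ univ = 1 := measure_univ
    rw [Set.univ_eq_empty_iff.mpr h, measure_empty] at h1
    exact zero_ne_one h1
  set ν : Measure (Y × X) := π1.map Prod.swap with hν
  haveI : IsProbabilityMeasure ν := Measure.isProbabilityMeasure_map measurable_swap.aemeasurable
  have hνfst : ν.fst = mY := by
    rw [Measure.fst, hν, Measure.map_map measurable_fst measurable_swap]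
    exact h1s
  have h2fst : π2.fst = mY := h2f
  set κ : Kernel Y X := ν.condKernel with hκ
  set η : Kernel Y Z := π2.condKernel with hη
  set ρ : Measure (Y × X × Z) := mY ⊗ₘ (κ ×ₖ η) with hρ
  haveI : IsProbabilityMeasure ρ := ⟨by rw [Measure.compProd_apply_univ]; exact measure_univ⟩
  have hmeas : Measurable fun p : Y × X × Z => (p.2.1, (p.1, p.2.2)) := by fun_prop
  refine ⟨ρ.map (fun p => (p.2.1, (p.1, p.2.2))), Measure.isProbabilityMeasure_map hmeas.aemeasurable,
    ?_, ?_⟩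
  · rw [Measure.map_map (by fun_prop) hmeas]
    have h : ((fun t : X × Y × Z => (t.1, t.2.1)) ∘ fun p : Y × X × Z => (p.2.1, (p.1, p.2.2)))
        = Prod.swap ∘ (fun p : Y × X × Z => (p.1, p.2.1)) := rfl
    rw [h, ← Measure.map_map measurable_swap (by fun_prop), map_compProd_prod_fst, ← hνfst,
      Measure.disintegrate, hν, Measure.map_map measurable_swap measurable_swap]
    simp [Prod.swap_swap_eq]
  · rw [Measure.map_map measurable_snd hmeas]
    have h : ((Prod.snd : X × Y × Z → Y × Z) ∘ fun p : Y × X × Z => (p.2.1, (p.1, p.2.2)))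
        = fun p : Y × X × Z => (p.1, p.2.2) := rfl
    rw [h, map_compProd_prod_snd, ← h2fst, Measure.disintegrate]

lemma key_step (mX : Measure X) (mY : Measure Y) (mZ : Measure Z)
    [IsProbabilityMeasure mX] [IsProbabilityMeasure mY] [IsProbabilityMeasure mZ]
    (π1 : Measure (X × Y)) (π2 : Measure (Y × Z))
    (h1f : π1.map Prod.fst = mX) (h1s : π1.map Prod.snd = mY)
    (h2f : π2.map Prod.fst = mY) (h2s : π2.map Prod.snd = mZ) :
    ∃ πXZ : Measure (X × Z), (πXZ.map Prod.fst = mX ∧ πXZ.map Prod.snd = mZ) ∧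
      ∀ S1 : Set (X × Y), IsClosed S1 → ∀ S2 : Set (Y × Z), IsClosed S2 →
        dism πXZ ≤ max (disS S1) (1 - π1 S1) + max (disS S2) (1 - π2 S2) := by
  obtain ⟨π, hπprob, hπ1, hπ2⟩ := glue_couplings mX mY mZ π1 π2 h1f h1s h2f h2s
  haveI := hπprob
  have hX : Nonempty X := by
    by_contra h
    rw [not_nonempty_iff] at h
    have h1 : mX univ = 1 := measure_univ
    rw [Set.univ_eq_empty_iff.mpr h, measure_empty] at h1
    exact zero_ne_one h1
  have hZ : Nonempty Z := by
    by_contra h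
    rw [not_nonempty_iff] at h
    have h1 : mZ univ = 1 := measure_univ
    rw [Set.univ_eq_empty_iff.mpr h, measure_empty] at h1
    exact zero_ne_one h1
  have hg : Measurable fun t : X × Y × Z => (t.1, t.2.2) := by fun_prop
  have hf1 : Measurable fun t : X × Y × Z => (t.1, t.2.1) := by fun_prop
  set πXZ : Measure (X × Z) := π.map (fun t => (t.1, t.2.2)) with hπXZ
  haveI : IsProbabilityMeasure πXZ := Measure.isProbabilityMeasure_map hg.aemeasurable
  have hcoupling : πXZ.map Prod.fst = mX ∧ πXZ.map Prod.snd = mZ := by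
    constructor
    · rw [hπXZ, Measure.map_map measurable_fst hg,
        show (Prod.fst ∘ fun t : X × Y × Z => (t.1, t.2.2))
          = Prod.fst ∘ fun t : X × Y × Z => (t.1, t.2.1) from rfl,
        ← Measure.map_map measurable_fst hf1, hπ1, h1f]
    · rw [hπXZ, Measure.map_map measurable_snd hg,
        show (Prod.snd ∘ fun t : X × Y × Z => (t.1, t.2.2))
          = Prod.snd ∘ (Prod.snd : X × Y × Z → Y × Z) from rfl,
        ← Measure.map_map measurable_snd measurable_snd, hπ2, h2s]
  refine ⟨πXZ, hcoupling, fun S1 hS1 S2 hS2 => ?_⟩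
  set T1 : Set (X × Y × Z) := (fun t : X × Y × Z => (t.1, t.2.1)) ⁻¹' S1 with hT1
  set T2 : Set (X × Y × Z) := Prod.snd ⁻¹' S2 with hT2
  have hπT1 : π T1ᶜ = 1 - π1 S1 := by
    haveI : IsProbabilityMeasure π1 := hπ1 ▸ Measure.isProbabilityMeasure_map hf1.aemeasurable
    rw [hT1, show ((fun t : X × Y × Z => (t.1, t.2.1)) ⁻¹' S1)ᶜ
        = (fun t : X × Y × Z => (t.1, t.2.1)) ⁻¹' S1ᶜ from rfl,
      ← Measure.map_apply hf1 hS1.measurableSet.compl, hπ1,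
      prob_compl_eq_one_sub hS1.measurableSet]
  have hπT2 : π T2ᶜ = 1 - π2 S2 := by
    haveI : IsProbabilityMeasure π2 := hπ2 ▸ Measure.isProbabilityMeasure_map measurable_snd.aemeasurable
    rw [hT2, show ((Prod.snd : X × Y × Z → Y × Z) ⁻¹' S2)ᶜ
        = (Prod.snd : X × Y × Z → Y × Z) ⁻¹' S2ᶜ from rfl,
      ← Measure.map_apply measurable_snd hS2.measurableSet.compl, hπ2,
      prob_compl_eq_one_sub hS2.measurableSet]
  set A := {p : X × Z | ∃ y, (p.1, y) ∈ S1 ∧ (y, p.2) ∈ S2} with hAdef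
  by_cases hne : A.Nonempty
  · -- use S = closure A
    set S : Set (X × Z) := closure A with hS
    have hstep : dism πXZ ≤ max (disS S) (1 - πXZ S) := by
      rw [dism]
      exact iInf₂_le S isClosed_closure
    refine hstep.trans (max_le ?_ ?_)
    · exact (disS_comp_le' hne).trans (add_le_add (le_max_left _ _) (le_max_left _ _))
    · have hSc : 1 - πXZ S = πXZ Sᶜ :=
        (prob_compl_eq_one_sub isClosed_closure.measurableSet).symm
      have hpre : (fun t : X × Y × Z => (t.1, t.2.2)) ⁻¹' Sᶜ ⊆ T1ᶜ ∪ T2ᶜ := by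
        rw [← compl_inter]
        refine compl_subset_compl.mpr fun t ht => ?_
        exact subset_closure ⟨t.2.1, ht.1, ht.2⟩
      calc 1 - πXZ S = πXZ Sᶜ := hSc
        _ = π ((fun t : X × Y × Z => (t.1, t.2.2)) ⁻¹' Sᶜ) :=
            Measure.map_apply hg isClosed_closure.measurableSet.compl
        _ ≤ π (T1ᶜ ∪ T2ᶜ) := measure_mono hpre
        _ ≤ π T1ᶜ + π T2ᶜ := measure_union_le _ _
        _ = (1 - π1 S1) + (1 - π2 S2) := by rw [hπT1, hπT2]
        _ ≤ _ := add_le_add (le_max_right _ _) (le_max_right _ _)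
  · -- A empty: use a singleton
    obtain ⟨x0⟩ := hX
    obtain ⟨z0⟩ := hZ
    set S : Set (X × Z) := {(x0, z0)} with hS
    have hstep : dism πXZ ≤ max (disS S) (1 - πXZ S) := by
      rw [dism]
      exact iInf₂_le S isClosed_singleton
    have hdisS : disS S = 0 := by
      rw [disS, if_neg (Nonempty.ne_empty (singleton_nonempty _))]
      refine le_antisymm (iSup₂_le fun p hp => iSup₂_le fun q hq => ?_) zero_le
      rw [mem_singleton_iff] at hp hq
      subst hp; subst hq
      simp
    have hone : (1 : ℝ≥0∞) ≤ (1 - π1 S1) + (1 - π2 S2) := by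
      have hTempty : T1 ∩ T2 = ∅ := by
        rw [eq_empty_iff_forall_notMem]
        rintro t ⟨ht1, ht2⟩
        exact hne ⟨(t.1, t.2.2), t.2.1, ht1, ht2⟩
      have huniv : (univ : Set (X × Y × Z)) = T1ᶜ ∪ T2ᶜ := by
        rw [← compl_inter, hTempty, compl_empty]
      calc (1 : ℝ≥0∞) = π univ := measure_univ.symm
        _ = π (T1ᶜ ∪ T2ᶜ) := by rw [huniv]
        _ ≤ π T1ᶜ + π T2ᶜ := measure_union_le _ _
        _ = _ := by rw [hπT1, hπT2]
    refine hstep.trans (max_le ?_ ?_)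
    · rw [hdisS]
      exact zero_le
    · calc 1 - πXZ S ≤ 1 := tsub_le_self
        _ ≤ (1 - π1 S1) + (1 - π2 S2) := hone
        _ ≤ _ := add_le_add (le_max_right _ _) (le_max_right _ _)

end Aux

theorem stmt19 {X : Type*} [MetricSpace X] [CompleteSpace X] [TopologicalSpace.SeparableSpace X]
    [MeasurableSpace X] [BorelSpace X] {Y : Type*} [MetricSpace Y] [CompleteSpace Y] [TopologicalSpace.SeparableSpace Y]
    [MeasurableSpace Y] [BorelSpace Y] {Z : Type*} [MetricSpace Z] [CompleteSpace Z] [TopologicalSpace.SeparableSpace Z]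
    [MeasurableSpace Z] [BorelSpace Z]
    (mX : Measure X) (mY : Measure Y) (mZ : Measure Z)
    [IsProbabilityMeasure mX] [IsProbabilityMeasure mY] [IsProbabilityMeasure mZ] :
    boxDistC mX mZ ≤ boxDistC mX mY + boxDistC mY mZ := by
  rw [show boxDistC mX mY
      = ⨅ π ∈ {π : Measure (X × Y) | π.map Prod.fst = mX ∧ π.map Prod.snd = mY}, dism π from rfl,
    show boxDistC mY mZ
      = ⨅ π ∈ {π : Measure (Y × Z) | π.map Prod.fst = mY ∧ π.map Prod.snd = mZ}, dism π from rfl]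
  refine le_iInf_add_iInf' fun π1 π2 => ?_
  by_cases h1 : π1 ∈ {π : Measure (X × Y) | π.map Prod.fst = mX ∧ π.map Prod.snd = mY}
  · by_cases h2 : π2 ∈ {π : Measure (Y × Z) | π.map Prod.fst = mY ∧ π.map Prod.snd = mZ}
    · rw [iInf_pos h1, iInf_pos h2]
      obtain ⟨πXZ, hc, hkey⟩ := key_step mX mY mZ π1 π2 h1.1 h1.2 h2.1 h2.2
      have hbox : boxDistC mX mZ ≤ dism πXZ := by
        rw [boxDistC]
        exact iInf₂_le πXZ hc
      refine hbox.trans ?_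
      rw [show dism π1
          = ⨅ S ∈ {S : Set (X × Y) | IsClosed S}, max (disS S) (1 - π1 S) from rfl,
        show dism π2
          = ⨅ S ∈ {S : Set (Y × Z) | IsClosed S}, max (disS S) (1 - π2 S) from rfl]
      refine le_iInf_add_iInf' fun S1 S2 => ?_
      by_cases hS1 : IsClosed S1
      · by_cases hS2 : IsClosed S2
        · rw [iInf_pos (show S1 ∈ {S : Set (X × Y) | IsClosed S} from hS1),
            iInf_pos (show S2 ∈ {S : Set (Y × Z) | IsClosed S} from hS2)]
          exact hkey S1 hS1 S2 hS2
        · rw [iInf_neg (show ¬ S2 ∈ {S : Set (Y × Z) | IsClosed S} from hS2), add_top]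
          exact le_top
      · rw [iInf_neg (show ¬ S1 ∈ {S : Set (X × Y) | IsClosed S} from hS1), top_add]
        exact le_top
    · rw [iInf_neg h2, add_top]
      exact le_top
  · rw [iInf_neg h1, top_add]
    exact le_top
end
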